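/- Let R be a finite commutative local ring, m ≤ n, and A an m×n matrix over R with rows α_1,…,α_m. The following statements are equivalent: (i) rk(A) = m; (ii) the rows α_1,…,α_m are linearly independent over R; (iii) there exists S ∈ GL_n(R) with AS = (I_m, 0); (iv) A has a right inverse. -/

import Mathlib

open Matrix

/-- The ideal generated by all `k × k` minors of a matrix. -/
def minorsIdeal {R : Type*} [CommRing R] {m n : ℕ}
    (A : Matrix (Fin m) (Fin n) R) (k : ℕ) : Ideal R :=
  Ideal.span {d | ∃ (r : Fin k → Fin m) (c : Fin k → Fin n), d = (A.submatrix r c).det}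

/-- The McCoy rank of a matrix. -/
noncomputable def mccoyRank {R : Type*} [CommRing R] {m n : ℕ}
    (A : Matrix (Fin m) (Fin n) R) : ℕ :=
  sSup {k | (minorsIdeal A k).annihilator = ⊥}

/-- The `m × n` block matrix `(I_m, 0)`. -/
def idZero (R : Type*) [CommRing R] (m n : ℕ) : Matrix (Fin m) (Fin n) R :=
  Matrix.of fun i j => if (i : ℕ) = (j : ℕ) then 1 else 0

section Helpers

lemma det_submatrix_mul_mem {R : Type*} [CommRing R] {k m n : ℕ}
    (A : Matrix (Fin m) (Fin n) R) (S : Matrix (Fin n) (Fin n) R)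
    (r : Fin k → Fin m) (c : Fin k → Fin n) :
    ((A * S).submatrix r c).det ∈ minorsIdeal A k := by
  classical
  have hM : ((A * S).submatrix r c)ᵀ
      = fun j => ∑ p : Fin n, S p (c j) • (fun i => A (r i) p) := by
    funext j i
    simp [Matrix.mul_apply, mul_comm, Finset.sum_apply]
  have h1 : ((A * S).submatrix r c).det
      = ((Matrix.detRowAlternating : (Fin k → R) [⋀^Fin k]→ₗ[R] R) :
          MultilinearMap R (fun _ : Fin k => Fin k → R) R)
        (fun j => ∑ p : Fin n, S p (c j) • (fun i => A (r i) p)) := by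
    rw [← Matrix.det_transpose, hM]
    rfl
  rw [h1, MultilinearMap.map_sum]
  refine Ideal.sum_mem _ fun f _ => ?_
  rw [MultilinearMap.map_smul_univ]
  have h2 : ((Matrix.detRowAlternating : (Fin k → R) [⋀^Fin k]→ₗ[R] R) :
      MultilinearMap R (fun _ : Fin k => Fin k → R) R)
        (fun j => (fun i => A (r i) (f j)))
      = (A.submatrix r f).det := by
    rw [← Matrix.det_transpose]
    rfl
  rw [h2, smul_eq_mul]
  exact Ideal.mul_mem_left _ _ (Ideal.subset_span ⟨r, f, rfl⟩)

lemma minorsIdeal_zero {R : Type*} [CommRing R] {m n : ℕ} (A : Matrix (Fin m) (Fin n) R) :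
    minorsIdeal A 0 = ⊤ := by
  rw [Ideal.eq_top_iff_one]
  exact Ideal.subset_span ⟨Fin.elim0, Fin.elim0, (Matrix.det_fin_zero).symm⟩

lemma annihilator_top_ideal {R : Type*} [CommRing R] :
    (⊤ : Ideal R).annihilator = ⊥ := by
  refine le_antisymm (fun x hx => ?_) bot_le
  have := Submodule.mem_annihilator.mp hx 1 trivial
  simpa using this

lemma minorsIdeal_eq_bot_of_lt {R : Type*} [CommRing R] {m n : ℕ}
    (A : Matrix (Fin m) (Fin n) R) {k : ℕ} (hk : m < k) :
    minorsIdeal A k = ⊥ := by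
  refine le_antisymm (Ideal.span_le.mpr ?_) bot_le
  rintro d ⟨r, c, rfl⟩
  obtain ⟨i, j, hij, hr⟩ := Fintype.exists_ne_map_eq_of_card_lt r (by simpa using hk)
  have : (A.submatrix r c).det = 0 :=
    Matrix.det_zero_of_row_eq hij (funext fun l => by simp [hr])
  simp [this]

lemma mccoyRank_eq_iff {R : Type*} [CommRing R] [Nontrivial R] {m n : ℕ}
    (A : Matrix (Fin m) (Fin n) R) :
    mccoyRank A = m ↔ (minorsIdeal A m).annihilator = ⊥ := by
  have h0 : 0 ∈ {k | (minorsIdeal A k).annihilator = ⊥} := by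
    simp [Set.mem_setOf_eq, minorsIdeal_zero, annihilator_top_ideal]
  have hb : ∀ k ∈ {k | (minorsIdeal A k).annihilator = ⊥}, k ≤ m := by
    intro k hk
    by_contra h
    rw [Set.mem_setOf_eq, minorsIdeal_eq_bot_of_lt A (by omega), Submodule.annihilator_bot] at hk
    exact top_ne_bot hk
  constructor
  · intro h
    have := Nat.sSup_mem ⟨0, h0⟩ ⟨m, hb⟩
    rwa [show sSup {k | (minorsIdeal A k).annihilator = ⊥} = m from h] at this
  · intro h
    exact le_antisymm (csSup_le ⟨0, h0⟩ hb) (le_csSup ⟨m, hb⟩ h)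

lemma linearIndependent_rows_iff {R : Type*} [CommRing R] {m n : ℕ}
    (A : Matrix (Fin m) (Fin n) R) :
    LinearIndependent R (fun i : Fin m => A i) ↔
      ∀ c : Fin m → R, Matrix.vecMul c A = 0 → c = 0 := by
  rw [Fintype.linearIndependent_iff]
  constructor
  · intro h c hc
    funext i
    refine h c ?_ i
    funext j
    have := congrFun hc j
    simpa [Matrix.vecMul, dotProduct, Finset.sum_apply] using this
  · intro h c hc i
    have : Matrix.vecMul c A = 0 := by
      funext j
      have := congrFun hc j
      simpa [Matrix.vecMul, dotProduct, Finset.sum_apply] using this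
    exact congrFun (h c this) i

lemma annihilator_ne_bot_of_dep {R : Type*} [CommRing R] {m n : ℕ}
    (A : Matrix (Fin m) (Fin n) R) {g : Fin m → R} (hg : Matrix.vecMul g A = 0)
    {i₀ : Fin m} (hgi : g i₀ ≠ 0) :
    (minorsIdeal A m).annihilator ≠ ⊥ := by
  classical
  have hmem : g i₀ ∈ (minorsIdeal A m).annihilator := by
    rw [minorsIdeal, Ideal.span, Submodule.mem_annihilator_span]
    rintro ⟨d, r, c, rfl⟩
    by_cases hr : Function.Injective r
    · have hbij : Function.Bijective r := (Finite.injective_iff_bijective).mp hr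
      set B := A.submatrix r c with hB
      have hd : Matrix.vecMul (g ∘ r) B = 0 := by
        funext j
        have : ∑ i : Fin m, g (r i) * A (r i) (c j) = ∑ p : Fin m, g p * A p (c j) := by
          exact Function.Bijective.sum_comp hbij (fun p => g p * A p (c j))
        have h2 : ∑ p : Fin m, g p * A p (c j) = Matrix.vecMul g A (c j) := by
          simp [Matrix.vecMul, dotProduct]
        simp only [Matrix.vecMul, dotProduct, hB, Matrix.submatrix_apply,
          Function.comp_apply, Pi.zero_apply]
        rw [this, h2, hg]
        rfl
      have h3 : Matrix.vecMul (g ∘ r) (B * B.adjugate) = 0 := by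
        rw [← Matrix.vecMul_vecMul, hd, Matrix.zero_vecMul]
      rw [Matrix.mul_adjugate] at h3
      obtain ⟨i, hi⟩ := hbij.surjective i₀
      have h4 := congrFun h3 i
      have h5 : g (r i) * B.det = 0 := by
        simpa [Matrix.vecMul, dotProduct, Matrix.smul_apply, Matrix.one_apply,
          mul_ite, Finset.sum_ite_eq'] using h4
      rw [hi] at h5
      rw [smul_eq_mul]
      exact h5
    · obtain ⟨i, j, hij, hrr⟩ := Function.not_injective_iff.mp hr
      have : (A.submatrix r c).det = 0 :=
        Matrix.det_zero_of_row_eq hrr (funext fun l => by simp [hij])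
      simp [this]
  intro h
  rw [h, Submodule.mem_bot] at hmem
  exact hgi hmem


variable {R : Type*} [CommRing R]

def oneBlock {n : ℕ} (M : Matrix (Fin n) (Fin n) R) : Matrix (Fin (n+1)) (Fin (n+1)) R :=
  Matrix.of fun j k =>
    Fin.cases (Fin.cases (1 : R) (fun _ => 0) k) (fun j' => Fin.cases 0 (fun k' => M j' k') k) j

@[simp] lemma oneBlock_zero_zero {n : ℕ} (M : Matrix (Fin n) (Fin n) R) :
    oneBlock M 0 0 = 1 := rfl
@[simp] lemma oneBlock_zero_succ {n : ℕ} (M : Matrix (Fin n) (Fin n) R) (k : Fin n) :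
    oneBlock M 0 k.succ = 0 := rfl
@[simp] lemma oneBlock_succ_zero {n : ℕ} (M : Matrix (Fin n) (Fin n) R) (j : Fin n) :
    oneBlock M j.succ 0 = 0 := rfl
@[simp] lemma oneBlock_succ_succ {n : ℕ} (M : Matrix (Fin n) (Fin n) R) (j k : Fin n) :
    oneBlock M j.succ k.succ = M j k := rfl

lemma oneBlock_mul {n : ℕ} (M N : Matrix (Fin n) (Fin n) R) :
    oneBlock M * oneBlock N = oneBlock (M * N) := by
  ext j k
  rw [Matrix.mul_apply]
  refine Fin.cases ?_ (fun j' => ?_) j <;> refine Fin.cases ?_ (fun k' => ?_) k <;>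
    simp [Fin.sum_univ_succ, Matrix.mul_apply]

lemma oneBlock_one {n : ℕ} : oneBlock (1 : Matrix (Fin n) (Fin n) R) = 1 := by
  ext j k
  refine Fin.cases ?_ (fun j' => ?_) j <;> refine Fin.cases ?_ (fun k' => ?_) k <;>
    simp [Matrix.one_apply, Fin.succ_ne_zero, (Fin.succ_ne_zero _).symm, Fin.succ_inj]

def oneBlockUnit {n : ℕ} (M : (Matrix (Fin n) (Fin n) R)ˣ) :
    (Matrix (Fin (n+1)) (Fin (n+1)) R)ˣ where
  val := oneBlock M.val
  inv := oneBlock M.inv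
  val_inv := by rw [oneBlock_mul, M.val_inv, oneBlock_one]
  inv_val := by rw [oneBlock_mul, M.inv_val, oneBlock_one]

lemma mul_oneBlock_zero {m n : ℕ} (A : Matrix (Fin m) (Fin (n+1)) R)
    (M : Matrix (Fin n) (Fin n) R) (i : Fin m) :
    (A * oneBlock M) i 0 = A i 0 := by
  rw [Matrix.mul_apply, Fin.sum_univ_succ]
  simp

lemma mul_oneBlock_succ {m n : ℕ} (A : Matrix (Fin m) (Fin (n+1)) R)
    (M : Matrix (Fin n) (Fin n) R) (i : Fin m) (k : Fin n) :
    (A * oneBlock M) i k.succ = ∑ j : Fin n, A i j.succ * M j k := by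
  rw [Matrix.mul_apply, Fin.sum_univ_succ]
  simp

def permUnit {n : ℕ} (σ : Equiv.Perm (Fin n)) : (Matrix (Fin n) (Fin n) R)ˣ where
  val := (1 : Matrix (Fin n) (Fin n) R).submatrix σ.symm id
  inv := (1 : Matrix (Fin n) (Fin n) R).submatrix id ⇑σ.symm
  val_inv := by
    rw [← Matrix.submatrix_mul _ _ _ id _ Function.bijective_id, Matrix.mul_one,
      Matrix.submatrix_one_equiv]
  inv_val := by
    rw [Matrix.submatrix_mul_equiv, Matrix.mul_one, Matrix.submatrix_id_id]

lemma mul_permUnit {m n : ℕ} (A : Matrix (Fin m) (Fin n) R) (σ : Equiv.Perm (Fin n)) :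
    A * (permUnit σ).val = A.submatrix id ⇑σ := by
  show A * (1 : Matrix (Fin n) (Fin n) R).submatrix ⇑σ.symm id = _
  rw [Matrix.mul_submatrix_one]
  simp

lemma socle_exists (R : Type*) [CommRing R] [IsLocalRing R] [Fintype R] :
    ∃ x : R, x ≠ 0 ∧ ∀ y ∈ IsLocalRing.maximalIdeal R, x * y = 0 := by
  have hnil : IsNilpotent (IsLocalRing.maximalIdeal R) := by
    have := IsArtinianRing.isNilpotent_jacobson_bot (R := R)
    rwa [IsLocalRing.jacobson_eq_maximalIdeal ⊥ bot_ne_top] at this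
  obtain ⟨t, ht⟩ := hnil
  have hP : ∃ k, (IsLocalRing.maximalIdeal R) ^ k = ⊥ := ⟨t, by rwa [← Ideal.zero_eq_bot]⟩
  classical
  set t0 := Nat.find hP with ht0
  have h0 : (IsLocalRing.maximalIdeal R) ^ t0 = ⊥ := Nat.find_spec hP
  have hpos : 0 < t0 := by
    rcases Nat.eq_zero_or_pos t0 with h | h
    · exfalso
      rw [h, pow_zero, Ideal.one_eq_top] at h0
      exact top_ne_bot h0
    · exact h
  have hne : (IsLocalRing.maximalIdeal R) ^ (t0 - 1) ≠ ⊥ := Nat.find_min hP (by omega)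
  obtain ⟨x, hx, hx0⟩ := Submodule.exists_mem_ne_zero_of_ne_bot hne
  refine ⟨x, hx0, fun y hy => ?_⟩
  have hmem : x * y ∈ (IsLocalRing.maximalIdeal R) ^ t0 := by
    have heq : (IsLocalRing.maximalIdeal R) ^ (t0 - 1) * IsLocalRing.maximalIdeal R
        = (IsLocalRing.maximalIdeal R) ^ t0 := by
      rw [← pow_succ]; congr 1; omega
    rw [← heq]
    exact Ideal.mul_mem_mul hx hy
  rwa [h0, Ideal.mem_bot] at hmem

lemma indep_mul_unit {m n : ℕ} {A : Matrix (Fin m) (Fin n) R}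
    (hA : ∀ c : Fin m → R, Matrix.vecMul c A = 0 → c = 0)
    (S : (Matrix (Fin n) (Fin n) R)ˣ) :
    ∀ c : Fin m → R, Matrix.vecMul c (A * S.val) = 0 → c = 0 := by
  intro c hc
  apply hA
  have h := congrArg (fun v => Matrix.vecMul v S.inv) hc
  simpa [Matrix.vecMul_vecMul, Matrix.mul_assoc, S.val_inv, Matrix.zero_vecMul] using h

lemma exists_gl_of_indep {R : Type*} [CommRing R] [IsLocalRing R] [Fintype R] :
    ∀ (m : ℕ) {n : ℕ}, m ≤ n → ∀ A : Matrix (Fin m) (Fin n) R,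
    (∀ c : Fin m → R, Matrix.vecMul c A = 0 → c = 0) →
    ∃ S : (Matrix (Fin n) (Fin n) R)ˣ, A * S.val = idZero R m n := by
  intro m
  induction m with
  | zero =>
    intro n _ A _
    exact ⟨1, by rw [Units.val_one, Matrix.mul_one]; ext i j; exact i.elim0⟩
  | succ m IH =>
    intro N hmn A hA
    obtain ⟨n, rfl⟩ : ∃ n', N = n' + 1 := ⟨N - 1, by omega⟩
    have hm : m ≤ n := by omega
    classical
    -- step 1 : a unit entry in row 0
    have hunit : ∃ j, IsUnit (A 0 j) := by
      by_contra h
      push_neg at h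
      obtain ⟨x, hx0, hxm⟩ := socle_exists R
      have hcA : Matrix.vecMul (fun i : Fin (m+1) => if i = 0 then x else 0) A = 0 := by
        funext j
        have heach : ∀ i : Fin (m+1), (if i = 0 then x else 0) * A i j
            = if i = 0 then x * A i j else 0 := by
          intro i
          by_cases hi : i = 0 <;> simp [hi]
        simp only [Matrix.vecMul, dotProduct, heach, Finset.sum_ite_eq',
          Finset.mem_univ, if_true, Pi.zero_apply]
        exact hxm _ ((IsLocalRing.mem_maximalIdeal _).mpr (mem_nonunits_iff.mpr (h j)))
      have := congrFun (hA _ hcA) 0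
      simp at this
      exact hx0 this
    obtain ⟨j₀, hj₀⟩ := hunit
    set σ : Equiv.Perm (Fin (n+1)) := Equiv.swap 0 j₀ with hσ
    set A₁ : Matrix (Fin (m+1)) (Fin (n+1)) R := A.submatrix id ⇑σ with hA₁def
    have hA₁eq : A₁ = A * (permUnit σ).val := (mul_permUnit A σ).symm
    have hu : IsUnit (A₁ 0 0) := by
      have : A₁ 0 0 = A 0 j₀ := by
        rw [hA₁def]
        simp [hσ, Equiv.swap_apply_left]
      rwa [this]
    set u : Rˣ := hu.unit with hudef
    have huval : (↑u : R) = A₁ 0 0 := hu.unit_spec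
    -- step 2 : clear row 0
    set T : Matrix (Fin (n+1)) (Fin (n+1)) R := Matrix.of fun j k =>
      if j = 0 then (if k = 0 then (↑u⁻¹ : R) else -(↑u⁻¹ : R) * A₁ 0 k)
      else if j = k then 1 else 0 with hTdef
    have hT_tri : T.BlockTriangular id := by
      intro i j hij
      have h1 : i ≠ 0 := by
        intro h; rw [h] at hij; exact absurd hij (by simp)
      have h2 : i ≠ j := by
        intro h; rw [h] at hij; exact lt_irrefl _ hij
      simp [hTdef, h1, h2]
    have hdetT : IsUnit T.det := by
      rw [Matrix.det_of_upperTriangular hT_tri]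
      have : ∏ i, T i i = (↑u⁻¹ : R) := by
        rw [Fin.prod_univ_succ]
        simp [hTdef, Fin.succ_ne_zero]
      rw [this]
      exact Units.isUnit u⁻¹
    set TU : (Matrix (Fin (n+1)) (Fin (n+1)) R)ˣ := ((Matrix.isUnit_iff_isUnit_det T).mpr hdetT).unit
      with hTUdef
    have hTU : TU.val = T := IsUnit.unit_spec _
    set A₂ : Matrix (Fin (m+1)) (Fin (n+1)) R := A₁ * T with hA₂def
    have hA₂eq : A₂ = A * (permUnit σ * TU).val := by
      rw [Units.val_mul, hTU, hA₂def, hA₁eq]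
      exact Matrix.mul_assoc _ _ _
    have hA₂col0 : ∀ i, A₂ i 0 = A₁ i 0 * (↑u⁻¹ : R) := by
      intro i
      rw [hA₂def, Matrix.mul_apply, Fin.sum_univ_succ]
      simp [hTdef, Fin.succ_ne_zero, (Fin.succ_ne_zero _)]
    have hA₂00 : A₂ 0 0 = 1 := by
      rw [hA₂col0, ← huval, Units.mul_inv]
    have hA₂0succ : ∀ k : Fin n, A₂ 0 k.succ = 0 := by
      intro k
      rw [hA₂def, Matrix.mul_apply, Fin.sum_univ_succ]
      have h1 : T 0 k.succ = -(↑u⁻¹ : R) * A₁ 0 k.succ := by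
        simp [hTdef, Fin.succ_ne_zero k]
      have h2 : ∀ j : Fin n, T j.succ k.succ = if j = k then 1 else 0 := by
        intro j
        simp [hTdef, Fin.succ_ne_zero, Fin.succ_inj]
      simp only [h1, h2, mul_ite, mul_one, mul_zero, Finset.sum_ite_eq', Finset.mem_univ, if_true]
      rw [← huval]
      ring_nf
      rw [mul_comm (↑u : R) (↑u⁻¹ : R), Units.inv_mul]
      ring
    have hA₂indep : ∀ c : Fin (m+1) → R, Matrix.vecMul c A₂ = 0 → c = 0 := by
      rw [hA₂eq]
      exact indep_mul_unit hA _
    -- step 3 : the lower-right block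
    set D : Matrix (Fin m) (Fin n) R := Matrix.of fun i j => A₂ i.succ j.succ with hDdef
    have hD : ∀ c : Fin m → R, Matrix.vecMul c D = 0 → c = 0 := by
      intro c' hc'
      set c : Fin (m+1) → R := Fin.cons (-∑ i, c' i * A₂ i.succ 0) c' with hcdef
      have hvc : Matrix.vecMul c A₂ = 0 := by
        funext k
        rw [Matrix.vecMul, dotProduct, Fin.sum_univ_succ]
        refine Fin.cases ?_ (fun k' => ?_) k
        · simp only [hcdef, Fin.cons_zero, Fin.cons_succ, hA₂00, mul_one, Pi.zero_apply]
          ring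
        · have := congrFun hc' k'
          simp only [Matrix.vecMul, dotProduct, hDdef, Matrix.of_apply,
            Pi.zero_apply] at this
          simp only [hcdef, Fin.cons_zero, Fin.cons_succ, hA₂0succ k', mul_zero, zero_add,
            Pi.zero_apply]
          exact this
      have hc0 := hA₂indep c hvc
      funext i
      have := congrFun hc0 i.succ
      simpa [hcdef] using this
    obtain ⟨S', hS'⟩ := IH hm D hD
    -- step 4 : block-diagonal multiplication
    set A₃ : Matrix (Fin (m+1)) (Fin (n+1)) R := A₂ * oneBlock S'.val with hA₃def
    have hA₃col0 : ∀ i, A₃ i 0 = A₂ i 0 := fun i => mul_oneBlock_zero _ _ i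
    have hA₃0succ : ∀ k : Fin n, A₃ 0 k.succ = 0 := by
      intro k
      rw [hA₃def, mul_oneBlock_succ]
      simp [hA₂0succ]
    have hA₃succsucc : ∀ (i : Fin m) (k : Fin n), A₃ i.succ k.succ = idZero R m n i k := by
      intro i k
      rw [hA₃def, mul_oneBlock_succ]
      have := congrFun (congrFun hS' i) k
      rw [Matrix.mul_apply] at this
      exact this
    -- step 5 : clear column 0
    set b : Fin m → R := fun i => A₂ i.succ 0 with hbdef
    set V : Matrix (Fin (n+1)) (Fin (n+1)) R := Matrix.of fun j k =>
      if k = 0 then (Fin.cases (1 : R)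
        (fun j' => -(if h : (j' : ℕ) < m then b ⟨j', h⟩ else 0)) j)
      else if j = k then 1 else 0 with hVdef
    have hV_tri : V.BlockTriangular OrderDual.toDual := by
      intro i j hij
      have hij' : (i : Fin (n+1)) < j := hij
      have h1 : j ≠ 0 := by
        intro h; rw [h] at hij'; exact absurd hij' (by simp)
      have h2 : i ≠ j := ne_of_lt hij'
      simp [hVdef, h1, h2]
    have hdetV : IsUnit V.det := by
      rw [Matrix.det_of_lowerTriangular V hV_tri]
      have : ∏ i, V i i = 1 := by
        rw [Fin.prod_univ_succ]
        simp [hVdef, Fin.succ_ne_zero]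
      rw [this]
      exact isUnit_one
    set VU : (Matrix (Fin (n+1)) (Fin (n+1)) R)ˣ := ((Matrix.isUnit_iff_isUnit_det V).mpr hdetV).unit
      with hVUdef
    have hVU : VU.val = V := IsUnit.unit_spec _
    set A₄ : Matrix (Fin (m+1)) (Fin (n+1)) R := A₃ * V with hA₄def
    have hA₄succ : ∀ (i : Fin (m+1)) (k : Fin n), A₄ i k.succ = A₃ i k.succ := by
      intro i k
      rw [hA₄def, Matrix.mul_apply]
      have h2 : ∀ j : Fin (n+1), V j k.succ = if j = k.succ then 1 else 0 := by
        intro j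
        simp [hVdef, Fin.succ_ne_zero k]
      simp only [h2, mul_ite, mul_one, mul_zero, Finset.sum_ite_eq', Finset.mem_univ, if_true]
    have hA₄00 : A₄ 0 0 = 1 := by
      rw [hA₄def, Matrix.mul_apply, Fin.sum_univ_succ]
      have h1 : V 0 0 = 1 := by simp [hVdef]
      have h3 : ∀ j : Fin n, A₃ 0 j.succ = 0 := hA₃0succ
      simp [h1, h3, hA₃col0, hA₂00]
    have hA₄succ0 : ∀ i : Fin m, A₄ i.succ 0 = 0 := by
      intro i
      rw [hA₄def, Matrix.mul_apply, Fin.sum_univ_succ]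
      have h1 : V 0 0 = 1 := by simp [hVdef]
      have h2 : ∀ j : Fin n, V j.succ 0 = -(if h : (j : ℕ) < m then b ⟨j, h⟩ else 0) := by
        intro j
        simp [hVdef]
      have h3 : ∀ j : Fin n, A₃ i.succ j.succ = if (i : ℕ) = (j : ℕ) then 1 else 0 := by
        intro j
        rw [hA₃succsucc]
        rfl
      rw [h1, hA₃col0]
      simp only [h2, h3, mul_one]
      have hsum : ∑ j : Fin n, (if (i : ℕ) = (j : ℕ) then (1:R) else 0) *
          (-(if h : (j : ℕ) < m then b ⟨j, h⟩ else 0)) = -(b i) := by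
        rw [Finset.sum_eq_single (Fin.castLE hm i)]
        · have hc : ((Fin.castLE hm i : Fin n) : ℕ) = (i : ℕ) := rfl
          rw [hc, if_pos rfl, one_mul, dif_pos i.isLt]
        · intro j _ hj
          have : ¬((i : ℕ) = (j : ℕ)) := by
            intro h
            apply hj
            apply Fin.ext
            simp [← h]
          simp [this]
        · intro h
          exact absurd (Finset.mem_univ _) h
      rw [hsum]
      ring
    -- conclusion
    refine ⟨permUnit σ * TU * oneBlockUnit S' * VU, ?_⟩
    have hAS : A * (permUnit σ * TU * oneBlockUnit S' * VU).val = A₄ := by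
      simp only [Units.val_mul, ← Matrix.mul_assoc]
      rw [hA₄def, hA₃def, hA₂def, hA₁eq, hTU, hVU]
      rfl
    rw [hAS]
    funext i k
    refine Fin.cases ?_ (fun i' => ?_) i <;> refine Fin.cases ?_ (fun k' => ?_) k
    · rw [hA₄00]; simp [idZero]
    · rw [hA₄succ, hA₃0succ]
      simp [idZero, (Nat.succ_ne_zero _).symm]
    · rw [hA₄succ0]
      simp [idZero, Nat.succ_ne_zero]
    · rw [hA₄succ, hA₃succsucc]
      simp [idZero]


lemma idZero_mul_rightInv {R : Type*} [CommRing R] {m n : ℕ} (hmn : m ≤ n) :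
    idZero R m n * Matrix.of (fun (j : Fin n) (i : Fin m) =>
      if (j : ℕ) = (i : ℕ) then (1 : R) else 0) = 1 := by
  funext i i'
  rw [Matrix.mul_apply, Finset.sum_eq_single (Fin.castLE hmn i)]
  · have hc : ((Fin.castLE hmn i : Fin n) : ℕ) = (i : ℕ) := rfl
    simp only [idZero, Matrix.of_apply, hc, if_pos rfl, one_mul, Matrix.one_apply]
    by_cases h : i = i'
    · simp [h]
    · have : ¬((i : ℕ) = (i' : ℕ)) := fun hh => h (Fin.ext hh)
      simp [h, this]
  · intro j _ hj
    have : ¬((i : ℕ) = (j : ℕ)) := by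
      intro h
      exact hj (Fin.ext (by simp [← h]))
    simp [idZero, this]
  · intro h
    exact absurd (Finset.mem_univ _) h

end Helpers

theorem mccoyRank_tfae_local {R : Type*} [CommRing R] [IsLocalRing R] [Fintype R]
    {m n : ℕ} (hmn : m ≤ n) (A : Matrix (Fin m) (Fin n) R) :
    [mccoyRank A = m,
     LinearIndependent R (fun i : Fin m => A i),
     ∃ S : GL (Fin n) R, A * (S : Matrix (Fin n) (Fin n) R) = idZero R m n,
     ∃ B : Matrix (Fin n) (Fin m) R, A * B = 1].TFAE := by
  classical
  tfae_have 1 → 2 := by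
    intro h1
    rw [linearIndependent_rows_iff]
    intro c hc
    by_contra hcne
    obtain ⟨i₀, hi₀⟩ : ∃ i, c i ≠ 0 := by
      by_contra h
      push_neg at h
      exact hcne (funext h)
    exact annihilator_ne_bot_of_dep A hc hi₀ ((mccoyRank_eq_iff A).mp h1)
  tfae_have 2 → 3 := by
    intro h2
    exact exists_gl_of_indep m hmn A ((linearIndependent_rows_iff A).mp h2)
  tfae_have 3 → 4 := by
    rintro ⟨S, hS⟩
    refine ⟨(S : Matrix (Fin n) (Fin n) R) * Matrix.of (fun (j : Fin n) (i : Fin m) =>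
      if (j : ℕ) = (i : ℕ) then (1 : R) else 0), ?_⟩
    rw [← Matrix.mul_assoc, hS]
    exact idZero_mul_rightInv hmn
  tfae_have 4 → 2 := by
    rintro ⟨B, hB⟩
    rw [linearIndependent_rows_iff]
    intro c hc
    have h := congrArg (fun v => Matrix.vecMul v B) hc
    simpa [Matrix.vecMul_vecMul, hB, Matrix.zero_vecMul, Matrix.vecMul_one] using h
  tfae_have 3 → 1 := by
    rintro ⟨S, hS⟩
    rw [mccoyRank_eq_iff]
    refine le_antisymm (fun x hx => ?_) bot_le
    have h1 : (1 : R) ∈ minorsIdeal A m := by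
      have he : (A * (S : Matrix (Fin n) (Fin n) R)).submatrix id (Fin.castLE hmn) = 1 := by
        funext i j
        rw [Matrix.submatrix_apply, hS]
        have hc : ((Fin.castLE hmn j : Fin n) : ℕ) = (j : ℕ) := rfl
        simp only [idZero, Matrix.of_apply, hc, Matrix.one_apply, id]
        by_cases h : i = j
        · simp [h]
        · have : ¬((i : ℕ) = (j : ℕ)) := fun hh => h (Fin.ext hh)
          simp [h, this]
      have hd : ((A * (S : Matrix (Fin n) (Fin n) R)).submatrix id (Fin.castLE hmn)).det = 1 := by
        rw [he, Matrix.det_one]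
      rw [← hd]
      exact det_submatrix_mul_mem A _ _ _
    have := Submodule.mem_annihilator.mp hx 1 h1
    simpa using this
  tfae_finish
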